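/- Let m be a non-negative integer and let w_1, …, w_N be distinct non-zero complex numbers. Then the functions z ↦ 1 − K_m(z, w_i), for i = 1, …, N, are linearly independent over ℂ, where K_m(z,w) = Σ_{n≥0} (m!/(n+m)!)(z·w̄)^n. -/

import Mathlib

open Finset

/-- The reproducing kernel of the Fock-Sobolev space `F^{2,m}(ℂ)`. -/
noncomputable def fockKernel (m : ℕ) (z w : ℂ) : ℂ :=
  ∑' n : ℕ, ((Nat.factorial m : ℂ) / (Nat.factorial (n + m))) * (z * (starRingEnd ℂ) w) ^ n

namespace FockAux

noncomputable def c (m : ℕ) (n : ℕ) : ℂ := (Nat.factorial m : ℂ) / (Nat.factorial (n + m))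

lemma fockKernel_eq (m : ℕ) (z w : ℂ) :
    fockKernel m z w = ∑' n : ℕ, c m n * (z * (starRingEnd ℂ) w) ^ n := rfl

lemma c_ne_zero (m n : ℕ) : c m n ≠ 0 := by
  apply div_ne_zero <;> exact_mod_cast Nat.cast_ne_zero.mpr (Nat.factorial_ne_zero _)

lemma c_zero (m : ℕ) : c m 0 = 1 := by
  simp [c, Nat.factorial_ne_zero, div_self,
    (Nat.cast_ne_zero (R := ℂ)).mpr (Nat.factorial_ne_zero m)]

lemma norm_c_le (m n : ℕ) : ‖c m n‖ ≤ 1 / n.factorial := by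
  have h : (n.factorial * m.factorial : ℕ) ≤ (n + m).factorial :=
    Nat.le_of_dvd (Nat.factorial_pos _) (Nat.factorial_mul_factorial_dvd_factorial_add n m)
  have hnm : (0:ℝ) < (n + m).factorial := by exact_mod_cast Nat.factorial_pos (n+m)
  have hn : (0:ℝ) < n.factorial := by exact_mod_cast Nat.factorial_pos n
  rw [c, norm_div]
  simp only [Complex.norm_natCast]
  rw [div_le_div_iff₀ hnm hn, one_mul]
  calc (m.factorial : ℝ) * n.factorial = (n.factorial * m.factorial : ℕ) := by push_cast; ring
    _ ≤ ((n + m).factorial : ℝ) := by exact_mod_cast h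

lemma summable_c_mul (m : ℕ) (x : ℂ) : Summable (fun n : ℕ => c m n * x ^ n) := by
  apply Summable.of_norm_bounded ((Real.summable_pow_div_factorial ‖x‖))
  intro n
  calc ‖c m n * x ^ n‖ = ‖c m n‖ * ‖x‖ ^ n := by rw [norm_mul, norm_pow]
    _ ≤ (1 / n.factorial) * ‖x‖ ^ n := by
        have := norm_c_le m n
        gcongr
    _ = ‖x‖ ^ n / n.factorial := by ring

lemma one_sub_tsum (m : ℕ) (u : ℂ) :
    1 - (∑' n : ℕ, c m n * u ^ n) = -∑' n : ℕ, c m (n + 1) * u ^ (n + 1) := by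
  rw [Summable.tsum_eq_zero_add (summable_c_mul m u)]
  simp [c_zero]

end FockAux

open FockAux in
theorem stmt3 (m N : ℕ) (w : Fin N → ℂ) (hw : Function.Injective w)
    (hw0 : ∀ i, w i ≠ 0) (a : Fin N → ℂ)
    (h : ∀ z : ℂ, ∑ i, a i * (1 - fockKernel m z (w i)) = 0) :
    ∀ i, a i = 0 := by
  set x : Fin N → ℂ := fun i => (starRingEnd ℂ) (w i) with hx
  -- coefficients of h as a power series
  set b : ℕ → ℂ := fun n => ∑ i, a i * x i ^ n with hb
  set d : ℕ → ℂ := fun n => if n = 0 then 0 else -(c m n * b n) with hd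
  -- norm bound on the terms
  have hdbound : ∀ (z : ℂ) (n : ℕ), ‖d n * z ^ n‖ ≤
      ∑ i, ‖a i‖ * ((‖x i‖ * ‖z‖) ^ n / n.factorial) := by
    intro z n
    have hpos : (0:ℝ) ≤ ∑ i, ‖a i‖ * ((‖x i‖ * ‖z‖) ^ n / n.factorial) := by
      apply Finset.sum_nonneg
      intro i _
      positivity
    rcases Nat.eq_zero_or_pos n with hn | hn
    · subst hn; simpa [hd] using hpos
    have hdn : d n = -(c m n * b n) := by
      simp [hd, Nat.pos_iff_ne_zero.mp hn]
    calc ‖d n * z ^ n‖ = ‖c m n‖ * ‖b n‖ * ‖z‖ ^ n := by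
          rw [hdn]; rw [norm_mul, norm_neg, norm_mul, norm_pow]
      _ ≤ (1 / n.factorial) * (∑ i, ‖a i‖ * ‖x i‖ ^ n) * ‖z‖ ^ n := by
          have h1 := norm_c_le m n
          have h2 : ‖b n‖ ≤ ∑ i, ‖a i‖ * ‖x i‖ ^ n := by
            refine (norm_sum_le _ _).trans ?_
            apply Finset.sum_le_sum
            intro i _
            rw [norm_mul, norm_pow]
          gcongr
      _ = ∑ i, ‖a i‖ * ((‖x i‖ * ‖z‖) ^ n / n.factorial) := by
          rw [Finset.mul_sum, Finset.sum_mul]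
          refine Finset.sum_congr rfl fun i _ => ?_
          rw [mul_pow]
          ring
  have hdsummable' : ∀ z : ℂ, Summable (fun n => ‖d n * z ^ n‖) := by
    intro z
    apply Summable.of_nonneg_of_le (fun n => norm_nonneg _) (hdbound z)
    apply summable_sum
    intro i _
    exact (Real.summable_pow_div_factorial (‖x i‖ * ‖z‖)).mul_left _
  have hdsummable : ∀ z : ℂ, Summable (fun n => d n * z ^ n) :=
    fun z => (hdsummable' z).of_norm
  -- the function is the sum of the power series with coefficients d
  have hsum : ∀ z : ℂ, (∑' n : ℕ, d n * z ^ n) = 0 := by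
    intro z
    have key : ∀ i, a i * (1 - fockKernel m z (w i))
        = ∑' n : ℕ, -(a i * (c m (n+1) * (z * x i) ^ (n+1))) := by
      intro i
      rw [fockKernel_eq, one_sub_tsum m (z * x i), mul_neg, ← tsum_mul_left, ← tsum_neg]
    calc (∑' n : ℕ, d n * z ^ n)
        = ∑' n : ℕ, d (n+1) * z ^ (n+1) := by
          rw [Summable.tsum_eq_zero_add (hdsummable z)]; simp [hd]
      _ = ∑' n : ℕ, ∑ i, -(a i * (c m (n+1) * (z * x i) ^ (n+1))) := by
          refine tsum_congr fun n => ?_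
          have hdn : d (n+1) = -(c m (n+1) * b (n+1)) := by simp [hd]
          rw [hdn, hb]
          rw [show (∑ i, -(a i * (c m (n+1) * (z * x i) ^ (n+1))))
              = -∑ i, a i * (c m (n+1) * (z * x i) ^ (n+1)) by simp]
          rw [neg_mul, neg_inj, Finset.mul_sum, Finset.sum_mul]
          refine Finset.sum_congr rfl fun i _ => ?_
          rw [mul_pow]; ring
      _ = ∑ i, ∑' n : ℕ, -(a i * (c m (n+1) * (z * x i) ^ (n+1))) := by
          apply Summable.tsum_finsetSum
          intro i _
          have : Summable (fun n : ℕ => c m (n+1) * (z * x i) ^ (n+1)) := by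
            apply (summable_c_mul m (z * x i)).comp_injective (add_left_injective 1)
          simpa using (this.mul_left (a i)).neg
      _ = ∑ i, a i * (1 - fockKernel m z (w i)) :=
          Finset.sum_congr rfl fun i _ => (key i).symm
      _ = 0 := h z
  -- d = 0 via power series uniqueness
  have hd0 : ∀ n, d n = 0 := by
    set p := FormalMultilinearSeries.ofScalars ℂ d with hp
    have hpsum : ∀ z : ℂ, p.sum z = ∑' n : ℕ, d n * z ^ n := by
      intro z
      refine tsum_congr fun n => ?_
      rw [hp, FormalMultilinearSeries.ofScalars_apply_eq, smul_eq_mul]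
    have hrad : 0 < p.radius := by
      refine lt_of_lt_of_le (by norm_num : (0:ENNReal) < 1) ?_
      have := FormalMultilinearSeries.le_radius_of_summable_norm (r := 1) p ?_
      · simpa using this
      · simp only [FormalMultilinearSeries.ofScalars_norm, hp]
        simpa using hdsummable' 1
    have hat : HasFPowerSeriesAt p.sum p 0 :=
      (p.hasFPowerSeriesOnBall hrad).hasFPowerSeriesAt
    have hzero : p = 0 := by
      apply hat.eq_zero_of_eventually
      filter_upwards with z
      rw [hpsum, hsum]; rfl
    have : d = 0 := by
      rw [hp] at hzero
      exact (FormalMultilinearSeries.ofScalars_series_eq_zero ℂ).mp hzero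
    exact fun n => congrFun this n
  -- hence b n = 0 for n ≥ 1
  have hb0 : ∀ n : ℕ, b (n + 1) = 0 := by
    intro n
    have := hd0 (n + 1)
    simp only [hd, Nat.succ_ne_zero, if_false, neg_eq_zero, mul_eq_zero] at this
    exact this.resolve_left (c_ne_zero m (n+1))
  -- Vandermonde
  have hxinj : Function.Injective x := fun i j hij => hw ((starRingEnd ℂ).injective hij)
  have hvand : (fun i => a i * x i) = 0 := by
    apply Matrix.eq_zero_of_forall_pow_sum_mul_pow_eq_zero hxinj
    intro i
    have h1 := hb0 i
    simp only [hb] at h1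
    rw [← h1]
    refine Finset.sum_congr rfl fun j _ => ?_
    ring
  intro i
  have := congrFun hvand i
  simp only [Pi.zero_apply, mul_eq_zero] at this
  refine this.resolve_right fun hxi => hw0 i ?_
  simpa [hx] using congrArg (starRingEnd ℂ) hxi
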